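/- Under the hypotheses that U is convex, f is holomorphic on U with Re(f') > 0 on U, z ∈ U, f(z) ∈ U, and z_t = (1−t)z + t f(z) for t ∈ [0,1], one has the quantitative lower bound |f(z_a) − z_a| ≥ |f(z) − z| · (a·m + 1 − a) for all a ∈ [0,1], where m = min over [z,f(z)] of Re(f') > 0. -/

import Mathlib

open Complex Metric Set

/-- with `z_a = (1-a) z + a f(z)` and `m = min_{[z,f z]} Re f' > 0`, one has
`|f(z_a) - z_a| ≥ |f z - z| (a m + 1 - a)` for all `a ∈ [0,1]`. -/
theorem segment_displacement_lower_bound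
    (U : Set ℂ) (hUo : IsOpen U) (hU : Convex ℝ U)
    (f : ℂ → ℂ) (hf : DifferentiableOn ℂ f U)
    (hre : ∀ w ∈ U, 0 < (deriv f w).re)
    (z : ℂ) (hz : z ∈ U) (hfz : f z ∈ U) (m : ℝ)
    (hm : IsLeast ((fun w => (deriv f w).re) '' segment ℝ z (f z)) m) :
    ∀ a ∈ Set.Icc (0:ℝ) 1,
      ‖f z - z‖ * (a * m + 1 - a) ≤
        ‖f ((1 - (a:ℂ)) * z + (a:ℂ) * f z) - ((1 - (a:ℂ)) * z + (a:ℂ) * f z)‖ := by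
  intro a ha
  set v : ℂ := f z - z with hv
  set c : ℝ → ℂ := fun t => z + (t : ℂ) * v with hc
  have hza : (1 - (a:ℂ)) * z + (a:ℂ) * f z = c a := by
    simp only [hc, hv]; ring
  rw [hza]
  have hseg : ∀ t ∈ Set.Icc (0:ℝ) 1, c t ∈ segment ℝ z (f z) := by
    intro t ht
    rw [segment_eq_image]
    refine ⟨t, ht, ?_⟩
    simp only [hc, hv, Complex.real_smul]
    push_cast
    ring
  have hsegU : segment ℝ z (f z) ⊆ U := hU.segment_subset hz hfz
  have hcU : ∀ t ∈ Set.Icc (0:ℝ) 1, c t ∈ U := fun t ht => hsegU (hseg t ht)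
  have hcder : ∀ t : ℝ, HasDerivAt c v t := by
    intro t
    have h1 : HasDerivAt (fun t : ℝ => (t : ℂ)) 1 t := Complex.ofRealCLM.hasDerivAt
    simpa only [one_mul] using (h1.mul_const v).const_add z
  have hF : ∀ t ∈ Set.Icc (0:ℝ) 1,
      HasDerivAt (fun s => f (c s)) (deriv f (c t) * v) t := by
    intro t ht
    have hdf : DifferentiableAt ℂ f (c t) :=
      hf.differentiableAt (hUo.mem_nhds (hcU t ht))
    have h := HasFDerivAt.comp_hasDerivAt t
      (hdf.hasDerivAt.hasFDerivAt.restrictScalars ℝ) (hcder t)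
    simp [Function.comp, mul_comm, smul_eq_mul] at h
    rw [mul_comm]
    exact h
  set ψ : ℝ → ℝ := fun t =>
      ((f (c t) - c t) * (starRingEnd ℂ) v).re - (t * (m - 1) + 1) * Complex.normSq v
    with hψdef
  have hψ : ∀ t ∈ Set.Icc (0:ℝ) 1,
      HasDerivAt ψ (Complex.normSq v * ((deriv f (c t)).re - m)) t := by
    intro t ht
    have A : HasDerivAt (fun s => f (c s) - c s) (deriv f (c t) * v - v) t :=
      (hF t ht).sub (hcder t)
    have B : HasDerivAt (fun s => (f (c s) - c s) * (starRingEnd ℂ) v)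
        ((deriv f (c t) * v - v) * (starRingEnd ℂ) v) t := A.mul_const _
    have C : HasDerivAt (fun s => ((f (c s) - c s) * (starRingEnd ℂ) v).re)
        (((deriv f (c t) * v - v) * (starRingEnd ℂ) v).re) t :=
      Complex.reCLM.hasFDerivAt.comp_hasDerivAt t B
    have L : HasDerivAt (fun s : ℝ => (s * (m - 1) + 1) * Complex.normSq v)
        ((m - 1) * Complex.normSq v) t := by
      simpa using (((hasDerivAt_id t).mul_const (m - 1)).add_const 1).mul_const
        (Complex.normSq v)
    have D := C.sub L
    refine D.congr_deriv ?_
    have key : (deriv f (c t) * v - v) * (starRingEnd ℂ) v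
        = (deriv f (c t) - 1) * (v * (starRingEnd ℂ) v) := by ring
    rw [key, Complex.mul_conj]
    simp [Complex.mul_re]
    ring
  have hψ0 : ∀ t ∈ Set.Icc (0:ℝ) 1,
      0 ≤ Complex.normSq v * ((deriv f (c t)).re - m) := by
    intro t ht
    have hm' : m ≤ (deriv f (c t)).re := hm.2 ⟨c t, hseg t ht, rfl⟩
    have := Complex.normSq_nonneg v
    nlinarith
  have hmono : MonotoneOn ψ (Set.Icc (0:ℝ) 1) := by
    apply monotoneOn_of_deriv_nonneg (convex_Icc 0 1)
    · intro t ht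
      exact (hψ t ht).continuousAt.continuousWithinAt
    · intro t ht
      rw [interior_Icc] at ht
      exact (hψ t (Ioo_subset_Icc_self ht)).differentiableAt.differentiableWithinAt
    · intro t ht
      rw [interior_Icc] at ht
      rw [(hψ t (Ioo_subset_Icc_self ht)).deriv]
      exact hψ0 t (Ioo_subset_Icc_self ht)
  have h0 : ψ 0 = 0 := by
    simp only [hψdef, hc]
    simp [Complex.mul_conj, ← hv]
  have hmem0 : (0:ℝ) ∈ Set.Icc (0:ℝ) 1 := ⟨le_refl 0, zero_le_one⟩
  have hkey : (a * (m - 1) + 1) * Complex.normSq v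
      ≤ ((f (c a) - c a) * (starRingEnd ℂ) v).re := by
    have := hmono hmem0 ha ha.1
    rw [h0] at this
    simp only [hψdef] at this
    linarith
  have habs : ((f (c a) - c a) * (starRingEnd ℂ) v).re
      ≤ ‖f (c a) - c a‖ * ‖v‖ := by
    calc ((f (c a) - c a) * (starRingEnd ℂ) v).re
        ≤ ‖(f (c a) - c a) * (starRingEnd ℂ) v‖ := Complex.re_le_norm _
      _ = ‖f (c a) - c a‖ * ‖v‖ := by
          rw [norm_mul, Complex.norm_conj]
  have hnsq : Complex.normSq v = ‖v‖ * ‖v‖ := by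
    rw [Complex.normSq_eq_norm_sq]; ring
  rcases eq_or_lt_of_le (norm_nonneg v) with h0v | h0v
  · rw [← h0v]
    simpa using norm_nonneg (f (c a) - c a)
  · have : (a * (m - 1) + 1) * (‖v‖ * ‖v‖)
        ≤ ‖f (c a) - c a‖ * ‖v‖ := by
      rw [← hnsq]; exact hkey.trans habs
    have h2 : (a * (m - 1) + 1) * ‖v‖ ≤ ‖f (c a) - c a‖ := by
      have := mul_le_mul_of_nonneg_right (le_refl (1 / ‖v‖)) (le_of_lt h0v)
      nlinarith
    nlinarith
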